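/- For every j ∈ ℕ, every integer n ≥ 1, every l ∈ ℤ, and every x ∈ [0,1], the n-tuple integral of the shifted dilate of φ is of size O(2^{−j}) uniformly in l and x: |∫₀^x ∫₀^{ξ_n} ⋯ ∫₀^{ξ₂} φ(2^j ξ₁ − l) dξ₁ ⋯ dξ_n| ≤ 2^{−j} · (3N−1) · (sup_{t∈ℝ} |φ(t)|) · x^{n−1}/(n−1)!. -/

import Mathlib

open MeasureTheory

/-- The `n`-tuple iterated integral `g^{∫n}(x) = ∫₀^x ∫₀^{ξ_n} ⋯ ∫₀^{ξ₂} g(ξ₁) dξ₁ ⋯ dξ_n`. -/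
noncomputable def iterInt (g : ℝ → ℝ) : ℕ → ℝ → ℝ
  | 0 => g
  | n + 1 => fun x => ∫ t in (0 : ℝ)..x, iterInt g n t

theorem nTuple_integral_shifted_dilate_small
    (N : ℕ) (hN : 2 ≤ N) (φ : ℝ → ℝ)
    (hφmeas : Measurable φ)
    (hφsupp : ∀ t : ℝ, t ∉ Set.Icc (0 : ℝ) (3 * N - 1) → φ t = 0)
    (B : ℝ) (hB : IsLUB (Set.range fun t => |φ t|) B)
    (j : ℕ) (n : ℕ) (hn : 1 ≤ n) (l : ℤ) (x : ℝ) (hx : x ∈ Set.Icc (0 : ℝ) 1) :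
    |iterInt (fun t => φ (2 ^ j * t - (l : ℝ))) n x| ≤
      ((2 : ℝ) ^ j)⁻¹ * (3 * (N : ℝ) - 1) * B * x ^ (n - 1) / (n - 1).factorial := by
  have hBnonneg : (0:ℝ) ≤ B := le_trans (abs_nonneg (φ 0)) (hB.1 ⟨0, rfl⟩)
  have hBd : ∀ t, |φ t| ≤ B := fun t => hB.1 ⟨t, rfl⟩
  have h2j : (0:ℝ) < 2 ^ j := by positivity
  have hNR : (2:ℝ) ≤ (N:ℝ) := by exact_mod_cast hN
  have h3N : (0:ℝ) ≤ 3 * (N:ℝ) - 1 := by linarith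
  set g : ℝ → ℝ := fun t => φ (2 ^ j * t - (l : ℝ)) with hgdef
  set S : Set ℝ := Set.Icc ((l:ℝ)/2^j) (((l:ℝ) + (3*(N:ℝ)-1))/2^j) with hSdef
  set C : ℝ := ((2:ℝ)^j)⁻¹ * (3*(N:ℝ)-1) * B with hCdef
  have hC0 : 0 ≤ C := by positivity
  have hgle : ∀ t, |g t| ≤ S.indicator (fun _ => B) t := by
    intro t
    by_cases ht : t ∈ S
    · rw [Set.indicator_of_mem ht]; exact hBd _
    · rw [Set.indicator_of_notMem ht]
      have hzero : g t = 0 := by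
        apply hφsupp
        intro hc
        apply ht
        have hmc : (2:ℝ)^j * t = t * 2^j := by ring
        constructor
        · rw [div_le_iff₀ h2j]
          have := hc.1
          nlinarith
        · rw [le_div_iff₀ h2j]
          have := hc.2
          nlinarith
      rw [hzero, abs_zero]
  have hSm : MeasurableSet S := measurableSet_Icc
  have hindInt : Integrable (S.indicator fun _ => B) := by
    rw [integrable_indicator_iff hSm]
    exact integrableOn_const (by rw [hSdef]; exact measure_Icc_lt_top.ne) (by simp)
  have hgmeas : Measurable g := hφmeas.comp ((measurable_id.const_mul _).sub measurable_const)
  have hgInt : Integrable g :=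
    hindInt.mono' hgmeas.aestronglyMeasurable
      (Filter.Eventually.of_forall fun t => by
        simpa [Real.norm_eq_abs] using hgle t)
  have hvol : (volume S).toReal = (3*(N:ℝ)-1)/2^j := by
    rw [hSdef, Real.volume_Icc,
      show ((l:ℝ) + (3*(N:ℝ)-1))/2^j - (l:ℝ)/2^j = (3*(N:ℝ)-1)/2^j from by ring,
      ENNReal.toReal_ofReal (by positivity)]
  have hindval : ∫ t, S.indicator (fun _ => B) t = C := by
    rw [integral_indicator hSm, setIntegral_const, measureReal_def, hvol, smul_eq_mul, hCdef]
    ring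
  have hbase : ∀ x : ℝ, 0 ≤ x → |∫ t in (0:ℝ)..x, g t| ≤ C := by
    intro y hy0
    calc |∫ t in (0:ℝ)..y, g t|
        ≤ ∫ t in (0:ℝ)..y, |g t| := by
          simpa [Real.norm_eq_abs] using
            intervalIntegral.norm_integral_le_integral_norm (μ := volume) (f := g) hy0
      _ = ∫ t in Set.Ioc (0:ℝ) y, |g t| := by
          rw [intervalIntegral.integral_of_le hy0]
      _ ≤ ∫ t in Set.Ioc (0:ℝ) y, S.indicator (fun _ => B) t := by
          apply setIntegral_mono (hgInt.abs.integrableOn) (hindInt.integrableOn)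
          exact hgle
      _ ≤ ∫ t, S.indicator (fun _ => B) t := by
          apply setIntegral_le_integral hindInt
          filter_upwards with t
          exact Set.indicator_nonneg (fun _ _ => hBnonneg) t
      _ = C := hindval
  have hcont : ∀ m : ℕ, Continuous (iterInt g (m+1)) := by
    intro m
    induction m with
    | zero =>
        show Continuous fun x => ∫ t in (0:ℝ)..x, iterInt g 0 t
        exact intervalIntegral.continuous_primitive (fun a b => hgInt.intervalIntegrable) 0
    | succ k ih =>
        show Continuous fun x => ∫ t in (0:ℝ)..x, iterInt g (k+1) t
        exact intervalIntegral.continuous_primitive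
          (fun a b => ih.intervalIntegrable a b) 0
  have main : ∀ n : ℕ, 1 ≤ n → ∀ x : ℝ, x ∈ Set.Icc (0:ℝ) 1 →
      |iterInt g n x| ≤ C * x ^ (n-1) / (n-1).factorial := by
    intro n hn
    induction n, hn using Nat.le_induction with
    | base =>
        intro y hy
        simpa [iterInt] using hbase y hy.1
    | succ n hn1 IH =>
        intro y hy
        obtain ⟨m, rfl⟩ : ∃ m, n = m + 1 := ⟨n - 1, (Nat.succ_pred_eq_of_pos hn1).symm⟩
        have key : ∀ t ∈ Set.Icc (0:ℝ) y, |iterInt g (m+1) t| ≤ C * t ^ m / m.factorial := by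
          intro t ht
          simpa using IH t ⟨ht.1, ht.2.trans hy.2⟩
        have h1 : |iterInt g (m+1+1) y| ≤ ∫ t in (0:ℝ)..y, C * t ^ m / m.factorial := by
          show |∫ t in (0:ℝ)..y, iterInt g (m+1) t| ≤ _
          have hnn : (0:ℝ) ≤ ∫ t in (0:ℝ)..y, C * t ^ m / m.factorial := by
            apply intervalIntegral.integral_nonneg hy.1
            intro t ht
            exact div_nonneg (mul_nonneg hC0 (pow_nonneg ht.1 m)) (Nat.cast_nonneg _)
          rw [← Real.norm_eq_abs, ← abs_of_nonneg hnn]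
          apply intervalIntegral.norm_integral_le_abs_of_norm_le
          · have hI : Set.uIoc (0:ℝ) y = Set.Ioc 0 y := Set.uIoc_of_le hy.1
            rw [hI]
            filter_upwards [ae_restrict_mem measurableSet_Ioc] with t ht
            rw [Real.norm_eq_abs]
            exact key t ⟨le_of_lt ht.1, ht.2⟩
          · exact (((continuous_const.mul (continuous_pow m)).div_const _).intervalIntegrable 0 y)
        have h2 : ∫ t in (0:ℝ)..y, C * t ^ m / (m.factorial:ℝ) =
            C * y ^ (m+1) / ((m+1).factorial:ℝ) := by
          have heq : ∀ t:ℝ, C * t^m / (m.factorial:ℝ) = (C / m.factorial) * t^m :=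
            fun t => by ring
          simp_rw [heq]
          rw [intervalIntegral.integral_const_mul, integral_pow]
          have hfac : ((m+1).factorial : ℝ) = ((m:ℝ)+1) * m.factorial := by
            rw [Nat.factorial_succ]; push_cast; ring
          rw [hfac, zero_pow (by omega : m+1 ≠ 0), sub_zero, div_mul_div_comm,
            mul_comm ((m.factorial:ℝ))]
        calc |iterInt g (m+1+1) y| ≤ ∫ t in (0:ℝ)..y, C * t ^ m / m.factorial := h1
          _ = C * y ^ (m+1) / ((m+1).factorial:ℝ) := h2
          _ = C * y ^ ((m+1+1)-1) / (((m+1+1)-1).factorial:ℝ) := by norm_num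
  have := main n hn x hx
  calc |iterInt g n x| ≤ C * x ^ (n-1) / (n-1).factorial := this
    _ = ((2 : ℝ) ^ j)⁻¹ * (3 * (N : ℝ) - 1) * B * x ^ (n - 1) / (n - 1).factorial := by
        rw [hCdef]
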